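/- If G is a graph which is not L-list-colourable for some assignment L of colour lists of size k to its vertices, then Mr. Paint wins the paint game with k−1 erasers per vertex; that is, χ_L(G) ≤ χ_P(G). -/
import Mathlib


variable {V : Type*}

/-- `I` is an independent set in `G`. -/
def IndepIn (G : SimpleGraph V) (I : Finset V) : Prop :=
  ∀ u ∈ I, ∀ v ∈ I, ¬ G.Adj u v

/-- The paint game with fuel `n`: the set `A` of uncoloured vertices, with token
function `f`, can be fully coloured by Mrs. Correct within `n` rounds. -/
def PaintableAux [DecidableEq V] (G : SimpleGraph V) : ℕ → Finset V → (V → ℕ) → Prop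
  | 0, A, _ => A = ∅
  | n + 1, A, f => (∀ v ∈ A, 1 ≤ f v) ∧
      ∀ S ⊆ A, S.Nonempty → ∃ I ⊆ S, IndepIn G I ∧
        PaintableAux G n (A \ I) (fun v => if v ∈ S \ I then f v - 1 else f v)

/-- Mrs. Correct wins the paint game on the uncoloured vertex set `A` with token
function `f` (a vertex with `f v = k` can be erased `k - 1` times).  Since each round
strictly decreases the total number of tokens on uncoloured vertices, the game is
finite and this is equivalent to the usual inductive definition of paintability. -/
def Paintable [DecidableEq V] (G : SimpleGraph V) (A : Finset V) (f : V → ℕ) : Prop :=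
  ∃ n, PaintableAux G n A f

/-- `G` is `k`-paintable: Mrs. Correct wins with `k - 1` erasers at each vertex. -/
def IsPaintable [Fintype V] [DecidableEq V] (G : SimpleGraph V) (k : ℕ) : Prop :=
  Paintable G Finset.univ fun _ => k

/-- The paintability (on-line choice number) `χ_P`. -/
noncomputable def chiP [Fintype V] [DecidableEq V] (G : SimpleGraph V) : ℕ :=
  sInf {k | IsPaintable G k}

lemma key [DecidableEq V] (G : SimpleGraph V) :
    ∀ n (A : Finset V) (f : V → ℕ) (L : V → Finset ℕ),
      PaintableAux G n A f → (∀ v ∈ A, f v ≤ (L v).card) →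
      ∃ c : V → ℕ, (∀ v ∈ A, c v ∈ L v) ∧
        ∀ u ∈ A, ∀ v ∈ A, G.Adj u v → c u ≠ c v := by
  intro n
  induction n with
  | zero =>
    intro A f L h _
    simp only [PaintableAux] at h
    subst h
    exact ⟨fun _ => 0, by simp, by simp⟩
  | succ n ih =>
    intro A f L h hL
    rcases h with ⟨h1, h2⟩
    rcases A.eq_empty_or_nonempty with rfl | ⟨v0, hv0⟩
    · exact ⟨fun _ => 0, by simp, by simp⟩
    · have hf0 : 1 ≤ f v0 := h1 v0 hv0
      have hLv0 : (L v0).Nonempty := Finset.card_pos.mp (lt_of_lt_of_le hf0 (hL v0 hv0))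
      obtain ⟨x, hx⟩ := hLv0
      set S : Finset V := A.filter (fun v => x ∈ L v) with hS
      have hSA : S ⊆ A := Finset.filter_subset _ _
      have hSne : S.Nonempty := ⟨v0, Finset.mem_filter.mpr ⟨hv0, hx⟩⟩
      obtain ⟨I, hIS, hInd, hP⟩ := h2 S hSA hSne
      have hL' : ∀ v ∈ A \ I,
          (if v ∈ S \ I then f v - 1 else f v) ≤ ((L v).erase x).card := by
        intro v hv
        rcases Finset.mem_sdiff.mp hv with ⟨hvA, hvI⟩
        by_cases hvS : v ∈ S
        · have hxL : x ∈ L v := (Finset.mem_filter.mp hvS).2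
          rw [if_pos (Finset.mem_sdiff.mpr ⟨hvS, hvI⟩), Finset.card_erase_of_mem hxL]
          exact Nat.sub_le_sub_right (hL v hvA) 1
        · have : v ∉ S \ I := fun h => hvS (Finset.mem_sdiff.mp h).1
          rw [if_neg this, Finset.erase_eq_of_notMem (fun h => hvS (Finset.mem_filter.mpr ⟨hvA, h⟩))]
          exact hL v hvA
      obtain ⟨c', hc'1, hc'2⟩ := ih (A \ I) _ (fun v => (L v).erase x) hP hL'
      refine ⟨fun v => if v ∈ I then x else c' v, ?_, ?_⟩
      · intro v hvA
        by_cases hvI : v ∈ I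
        · simpa [hvI] using (Finset.mem_filter.mp (hIS hvI)).2
        · simpa [hvI] using Finset.erase_subset x (L v) (hc'1 v (Finset.mem_sdiff.mpr ⟨hvA, hvI⟩))
      · intro u hu v hv hadj
        by_cases huI : u ∈ I <;> by_cases hvI : v ∈ I <;> simp only [huI, hvI, if_pos, if_neg, if_true, if_false]
        · exact absurd hadj (hInd u huI v hvI)
        · intro he
          exact Finset.notMem_erase x (L v) (he ▸ hc'1 v (Finset.mem_sdiff.mpr ⟨hv, hvI⟩))
        · intro he
          exact Finset.notMem_erase x (L u) (he ▸ hc'1 u (Finset.mem_sdiff.mpr ⟨hu, huI⟩))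
        · exact hc'2 u (Finset.mem_sdiff.mpr ⟨hu, huI⟩) v (Finset.mem_sdiff.mpr ⟨hv, hvI⟩) hadj

/-- If `G` is `k`-paintable then `G` is `k`-choosable: for every assignment of
lists of size `k` there is a proper colouring from the lists.  (Equivalently, if
some list assignment of size `k` admits no proper colouring, then Mr. Paint wins
the paint game with `k - 1` erasers per vertex; that is, `χ_L(G) ≤ χ_P(G)`.) -/
theorem choosable_of_paintable [Fintype V] [DecidableEq V] (G : SimpleGraph V)
    (k : ℕ) (hpaint : IsPaintable G k) :
    ∀ L : V → Finset ℕ, (∀ v, (L v).card = k) →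
      ∃ c : V → ℕ, (∀ v, c v ∈ L v) ∧ ∀ u v, G.Adj u v → c u ≠ c v := by
  intro L hLcard
  obtain ⟨n, hn⟩ := hpaint
  obtain ⟨c, hc1, hc2⟩ := key G n Finset.univ _ L hn (fun v _ => (hLcard v).ge)
  exact ⟨c, fun v => hc1 v (Finset.mem_univ v),
    fun u v h => hc2 u (Finset.mem_univ u) v (Finset.mem_univ v) h⟩
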